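/- For every n ≥ 2 and every well-rounded lattice L in ℝⁿ possessing a weakly nearly orthogonal basis, |S(L)| ≤ 4n − 2. -/

import Mathlib

open scoped RealInnerProductSpace
open Submodule Metric MeasureTheory

noncomputable section

abbrev Evec (n : ℕ) := EuclideanSpace ℝ (Fin n)

/-- The lattice generated (over ℤ) by the vectors `b 0, …, b (n-1)`. -/
def latticeOf {n : ℕ} (b : Fin n → Evec n) : Set (Evec n) :=
  {x | ∃ c : Fin n → ℤ, x = ∑ i, (c i : ℝ) • b i}

/-- The set of minimal vectors `S(L)` of a lattice `L`. -/
def minVecs {n : ℕ} (L : Set (Evec n)) : Set (Evec n) :=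
  {x | x ∈ L ∧ x ≠ 0 ∧ ∀ y ∈ L, y ≠ 0 → ‖x‖ ≤ ‖y‖}

/-- `L` is well-rounded: its minimal vectors span `ℝⁿ`. -/
def IsWellRounded {n : ℕ} (L : Set (Evec n)) : Prop :=
  Submodule.span ℝ (minVecs L) = ⊤

/-- `L` has minimal norm `m`. -/
def hasMinNorm {n : ℕ} (L : Set (Evec n)) (m : ℝ) : Prop :=
  (∃ x ∈ L, x ≠ 0 ∧ ‖x‖ = m) ∧ ∀ x ∈ L, x ≠ 0 → m ≤ ‖x‖

/-- The angle in `[0, π/2]` between a vector `v` and a subspace `V`,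
whose cosine is `‖proj_V v‖ / ‖v‖`. -/
def subAngle {n : ℕ} (v : Evec n) (V : Submodule ℝ (Evec n)) : ℝ :=
  Real.arccos (‖(orthogonalProjection V v : Evec n)‖ / ‖v‖)

/-- The ordered basis `b` is weakly θ-orthogonal. -/
def WeaklyOrth {n : ℕ} (θ : ℝ) (b : Fin n → Evec n) : Prop :=
  ∀ i : Fin n, 0 < (i : ℕ) →
    θ ≤ subAngle (b i) (Submodule.span ℝ (b '' {j | j < i}))

/-- The basis `b` is θ-orthogonal: every ordering of it is weakly θ-orthogonal. -/
def Orth {n : ℕ} (θ : ℝ) (b : Fin n → Evec n) : Prop :=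
  ∀ σ : Equiv.Perm (Fin n), WeaklyOrth θ (b ∘ σ)

/-- A nearly orthogonal basis is a π/3-orthogonal basis. -/
def NearlyOrth {n : ℕ} (b : Fin n → Evec n) : Prop := Orth (Real.pi / 3) b

/-- A weakly nearly orthogonal basis is a weakly π/3-orthogonal basis. -/
def WeaklyNearlyOrth {n : ℕ} (b : Fin n → Evec n) : Prop := WeaklyOrth (Real.pi / 3) b

/-- Coherence `C(L)` of a lattice. -/
def coherence {n : ℕ} (L : Set (Evec n)) : ℝ :=
  sSup {t | ∃ x ∈ minVecs L, ∃ y ∈ minVecs L, x ≠ y ∧ x ≠ -y ∧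
    t = abs ⟪x, y⟫ / (‖x‖ * ‖y‖)}

/-- `μ(B)`: minimal absolute cosine of angles between distinct basis vectors. -/
def muB {n : ℕ} (b : Fin n → Evec n) : ℝ :=
  sInf {t | ∃ i j : Fin n, i ≠ j ∧ t = abs ⟪b i, b j⟫ / (‖b i‖ * ‖b j‖)}

/-- `ν(B)`: maximal absolute cosine of angles between distinct basis vectors. -/
def nuB {n : ℕ} (b : Fin n → Evec n) : ℝ :=
  sSup {t | ∃ i j : Fin n, i ≠ j ∧ t = abs ⟪b i, b j⟫ / (‖b i‖ * ‖b j‖)}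

/-- The determinant of the lattice with basis `b`. -/
def latDet {n : ℕ} (b : Fin n → Evec n) : ℝ :=
  |(Matrix.of fun i j : Fin n => b j i).det|

/-- Packing density of a lattice with basis `b` and minimal norm `m`:
`ω_n · m^n / (2^n · det L)`. -/
def packDensity {n : ℕ} (m : ℝ) (b : Fin n → Evec n) : ℝ :=
  (volume (ball (0 : Evec n) 1)).toReal * m ^ n / (2 ^ n * latDet b)

/-- `L` is strongly eutactic. -/
def StronglyEutactic {n : ℕ} (L : Set (Evec n)) : Prop :=
  ∃ c : ℝ, 0 < c ∧ ∀ v : Evec n, ‖v‖ ^ 2 = c * ∑ᶠ x ∈ minVecs L, ⟪v, x⟫ ^ 2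

/-- `L` is perfect: `{x xᵀ : x ∈ S(L)}` spans the symmetric `n × n` matrices. -/
def IsPerfect {n : ℕ} (L : Set (Evec n)) : Prop :=
  ∀ A : Matrix (Fin n) (Fin n) ℝ, A.IsSymm →
    A ∈ Submodule.span ℝ ((fun x : Evec n => Matrix.of fun i j => x i * x j) '' minVecs L)

end


/-! ### Auxiliary machinery for stmt_11 -/

noncomputable section Aux11
open Classical Submodule

variable {n : ℕ}

def aCoef (b : Fin n → Evec n) (x : Evec n) : Fin n → ℤ :=
  if h : x ∈ latticeOf b then h.choose else 0

theorem aCoef_spec (b : Fin n → Evec n) {x : Evec n} (hx : x ∈ latticeOf b) :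
    x = ∑ i, (aCoef b x i : ℝ) • b i := by
  simp only [aCoef, dif_pos hx]
  exact hx.choose_spec

theorem lat_self_mem (b : Fin n → Evec n) (k : Fin n) : b k ∈ latticeOf b := by
  refine ⟨fun i => if i = k then 1 else 0, ?_⟩
  rw [Finset.sum_eq_single k] <;> simp +contextual

theorem lat_sub_mem (b : Fin n → Evec n) {x y : Evec n}
    (hx : x ∈ latticeOf b) (hy : y ∈ latticeOf b) : x - y ∈ latticeOf b := by
  obtain ⟨c, hc⟩ := hx
  obtain ⟨d, hd⟩ := hy
  refine ⟨c - d, ?_⟩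
  rw [hc, hd, ← Finset.sum_sub_distrib]
  refine Finset.sum_congr rfl fun i _ => ?_
  simp [Pi.sub_apply, sub_smul]

def aSupp (b : Fin n → Evec n) (x : Evec n) : Finset (Fin n) :=
  Finset.univ.filter (fun i => aCoef b x i ≠ 0)

theorem aSupp_nonempty (b : Fin n → Evec n) {x : Evec n} (hx : x ∈ latticeOf b)
    (hx0 : x ≠ 0) : (aSupp b x).Nonempty := by
  by_contra h
  rw [Finset.not_nonempty_iff_eq_empty, aSupp, Finset.filter_eq_empty_iff] at h
  apply hx0
  rw [aCoef_spec b hx]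
  refine Finset.sum_eq_zero fun i hi => ?_
  have := h hi
  push_neg at this
  simp [this]

def aTop [NeZero n] (b : Fin n → Evec n) (x : Evec n) : Fin n :=
  if h : (aSupp b x).Nonempty then (aSupp b x).max' h else 0

theorem aTop_mem [NeZero n] (b : Fin n → Evec n) {x : Evec n} (hx : x ∈ latticeOf b)
    (hx0 : x ≠ 0) : aCoef b x (aTop b x) ≠ 0 := by
  have h := aSupp_nonempty b hx hx0
  have := (aSupp b x).max'_mem h
  simp only [aTop, dif_pos h]
  simpa [aSupp] using this

theorem aTop_gt [NeZero n] (b : Fin n → Evec n) {x : Evec n} (hx : x ∈ latticeOf b)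
    (hx0 : x ≠ 0) : ∀ i, aTop b x < i → aCoef b x i = 0 := by
  intro i hi
  by_contra hci
  have h := aSupp_nonempty b hx hx0
  have hmem : i ∈ aSupp b x := by simp [aSupp, hci]
  have hle := (aSupp b x).le_max' i hmem
  simp only [aTop, dif_pos h] at hi
  exact absurd hi (not_lt.mpr hle)

def aV (b : Fin n → Evec n) (k : Fin n) : Submodule ℝ (Evec n) :=
  Submodule.span ℝ (b '' {j | j < k})

def aW (b : Fin n → Evec n) (x : Evec n) (k : Fin n) : Evec n :=
  (orthogonalProjection (aV b k) x : Evec n)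

def aQ (b : Fin n → Evec n) (k : Fin n) : Evec n := b k - aW b (b k) k

theorem aW_mem (b : Fin n → Evec n) (x : Evec n) (k : Fin n) : aW b x k ∈ aV b k :=
  SetLike.coe_mem _

theorem aPyth (b : Fin n → Evec n) (x : Evec n) (k : Fin n) :
    ‖x‖ ^ 2 = ‖aW b x k‖ ^ 2 + ‖x - aW b x k‖ ^ 2 := by
  have h : (inner ℝ (x - aW b x k) (aW b x k) : ℝ) = 0 :=
    starProjection_inner_eq_zero (K := aV b k) x (aW b x k) (aW_mem b x k)
  have h2 := norm_add_sq_real (aW b x k) (x - aW b x k)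
  rw [real_inner_comm] at h2
  rw [h] at h2
  simp only [add_sub_cancel, mul_zero, add_zero] at h2
  linarith

theorem aDecomp (b : Fin n → Evec n) {x : Evec n} {k : Fin n} (hx : x ∈ latticeOf b)
    (h : ∀ i, k < i → aCoef b x i = 0) :
    x = aW b x k + (aCoef b x k : ℝ) • aQ b k := by
  set v := ∑ i ∈ Finset.univ.erase k, (aCoef b x i : ℝ) • b i with hv
  have hxv : x = v + (aCoef b x k : ℝ) • b k := by
    conv_lhs => rw [aCoef_spec b hx]
    rw [hv, ← Finset.sum_erase_add _ _ (Finset.mem_univ k)]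
  have hvV : v ∈ aV b k := by
    refine Submodule.sum_mem _ fun i hi => ?_
    rcases lt_or_ge i k with h1 | h1
    · exact Submodule.smul_mem _ _ (Submodule.subset_span ⟨i, h1, rfl⟩)
    · have hne : i ≠ k := Finset.ne_of_mem_erase hi
      have : k < i := lt_of_le_of_ne h1 (Ne.symm hne)
      rw [h i this]
      simp
  have hwx : aW b x k = v + (aCoef b x k : ℝ) • aW b (b k) k := by
    have hmap : orthogonalProjection (aV b k) x
        = orthogonalProjection (aV b k) v
          + (aCoef b x k : ℝ) • orthogonalProjection (aV b k) (b k) := by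
      conv_lhs => rw [hxv]
      rw [map_add, _root_.map_smul]
    have h2 : ((orthogonalProjection (aV b k) v : aV b k) : Evec n) = v :=
      (starProjection_eq_self_iff (K := aV b k)).mpr hvV
    show ((orthogonalProjection (aV b k) x : aV b k) : Evec n) = _
    rw [hmap]
    push_cast
    rw [h2]
    rfl
  conv_lhs => rw [hxv]
  rw [hwx, aQ, smul_sub]
  abel

end Aux11

set_option maxHeartbeats 2000000 in
/-- a well-rounded lattice with a weakly nearly orthogonal basis
has at most `4n - 2` minimal vectors. -/
theorem stmt_11 (n : ℕ) (hn : 2 ≤ n) (b : Fin n → Evec n)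
    (hb : LinearIndependent ℝ b) (hW : WeaklyNearlyOrth b)
    (hWR : IsWellRounded (latticeOf b)) :
    (minVecs (latticeOf b)).ncard ≤ 4 * n - 2 := by
  classical
  haveI : NeZero n := ⟨by omega⟩
  rcases Set.eq_empty_or_nonempty (minVecs (latticeOf b)) with hSe | ⟨x₀, hx₀⟩
  · simp [hSe]
  obtain ⟨hx₀L, hx₀ne, hx₀min⟩ := hx₀
  set m := ‖x₀‖ with hm
  have hm0 : 0 < m := norm_pos_iff.mpr hx₀ne
  have hmlb : ∀ y ∈ latticeOf b, y ≠ 0 → m ≤ ‖y‖ := hx₀min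
  have hnorm : ∀ x ∈ minVecs (latticeOf b), ‖x‖ = m := by
    rintro x ⟨hxL, hxne, hxmin⟩
    exact le_antisymm (hxmin x₀ hx₀L hx₀ne) (hmlb x hxL hxne)
  have hbkm : ∀ k, m ≤ ‖b k‖ := fun k => hmlb _ (lat_self_mem b k) (hb.ne_zero k)
  -- the projection of b k on the span of earlier vectors is short
  have hV0 : aV b (0 : Fin n) = ⊥ := by
    have h0 : {j : Fin n | j < 0} = ∅ := by
      ext j
      simp [Fin.lt_def]
    simp [aV, h0]
  have hw0 : ∀ v : Evec n, aW b v 0 = 0 := by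
    intro v
    have h := aW_mem b v 0
    rw [hV0] at h
    simpa using h
  have hprojle : ∀ (v : Evec n) k, ‖aW b v k‖ ≤ ‖v‖ := by
    intro v k
    have h := aPyth b v k
    nlinarith [norm_nonneg (aW b v k), norm_nonneg (v - aW b v k), norm_nonneg v]
  have hproj : ∀ k, ‖aW b (b k) k‖ ≤ ‖b k‖ / 2 := by
    intro k
    rcases Nat.eq_zero_or_pos (k : ℕ) with hk | hk
    · have hk0 : k = 0 := by
        ext
        simpa using hk
      rw [hk0, hw0]
      simp
      positivity
    · have h : Real.pi / 3 ≤ Real.arccos (‖aW b (b k) k‖ / ‖b k‖) := hW k hk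
      have hbpos : 0 < ‖b k‖ := norm_pos_iff.mpr (hb.ne_zero k)
      have ht1 : ‖aW b (b k) k‖ / ‖b k‖ ≤ 1 := by
        rw [div_le_one hbpos]
        exact hprojle _ _
      have ht0 : (0:ℝ) ≤ ‖aW b (b k) k‖ / ‖b k‖ := by positivity
      have hcos : Real.cos (Real.arccos (‖aW b (b k) k‖ / ‖b k‖)) ≤ Real.cos (Real.pi / 3) :=
        Real.cos_le_cos_of_nonneg_of_le_pi (by positivity)
          (Real.arccos_le_pi _) h
      rw [Real.cos_arccos (by linarith) ht1, Real.cos_pi_div_three] at hcos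
      rw [div_le_iff₀ hbpos] at hcos
      linarith
  have hq : ∀ k, 3/4 * m^2 ≤ ‖aQ b k‖^2 := by
    intro k
    have hp := aPyth b (b k) k
    have h2 := hproj k
    have h3 := hbkm k
    have : aQ b k = b k - aW b (b k) k := rfl
    rw [← this] at hp
    nlinarith [norm_nonneg (aW b (b k) k), hm0]
  -- decomposition of minimal vectors
  have hkey0 : ∀ x ∈ minVecs (latticeOf b),
      x = aW b x (aTop b x) + (aCoef b x (aTop b x) : ℝ) • aQ b (aTop b x) := by
    rintro x ⟨hxL, hxne, -⟩
    exact aDecomp b hxL (aTop_gt b hxL hxne)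
  have hsq : ∀ x ∈ minVecs (latticeOf b),
      m^2 = ‖aW b x (aTop b x)‖^2 + (aCoef b x (aTop b x):ℝ)^2 * ‖aQ b (aTop b x)‖^2 := by
    intro x hx
    have hp := aPyth b x (aTop b x)
    have hd : x - aW b x (aTop b x) = (aCoef b x (aTop b x):ℝ) • aQ b (aTop b x) :=
      sub_eq_iff_eq_add'.mpr (hkey0 x hx)
    rw [hnorm x hx, hd, norm_smul] at hp
    rw [hp]
    simp [mul_pow, sq_abs]
  have hc1 : ∀ x ∈ minVecs (latticeOf b),
      aCoef b x (aTop b x) = 1 ∨ aCoef b x (aTop b x) = -1 := by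
    intro x hx
    obtain ⟨hxL, hxne, -⟩ := id hx
    have h1 := hsq x hx
    have h2 := hq (aTop b x)
    have h3 : aCoef b x (aTop b x) ≠ 0 := aTop_mem b hxL hxne
    set cc := aCoef b x (aTop b x) with hcc
    have h4 : (1:ℝ) ≤ (cc:ℝ)^2 := by
      have h5 : 1 ≤ cc^2 := by
        rcases h3.lt_or_gt with h | h <;> nlinarith
      calc (1:ℝ) = ((1:ℤ):ℝ) := by norm_num
      _ ≤ ((cc^2 : ℤ) : ℝ) := by exact_mod_cast h5
      _ = (cc:ℝ)^2 := by push_cast; ring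
    have h5 : (cc:ℝ)^2 ≤ 4/3 := by
      nlinarith [mul_le_mul_of_nonneg_left h2 (sq_nonneg (cc:ℝ)), sq_nonneg ‖aW b x (aTop b x)‖, mul_pos hm0 hm0, sq_nonneg (cc:ℝ)]
    have h6 : cc^2 = 1 := by
      have h7 : cc^2 ≤ 1 := by
        by_contra h7
        push_neg at h7
        have : (2:ℝ) ≤ (cc:ℝ)^2 := by exact_mod_cast h7
        linarith
      have h8 : 1 ≤ cc^2 := by exact_mod_cast h4
      omega
    have h7 : cc * cc = 1 := by nlinarith
    exact Int.isUnit_iff.mp (IsUnit.of_mul_eq_one _ h7)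
  have hwb : ∀ x ∈ minVecs (latticeOf b), ‖aW b x (aTop b x)‖^2 ≤ m^2/4 := by
    intro x hx
    have h1 := hsq x hx
    have h2 := hq (aTop b x)
    have h3 : (aCoef b x (aTop b x):ℝ)^2 = 1 := by
      rcases hc1 x hx with h | h <;> rw [h] <;> norm_num
    nlinarith
  -- difference of two minimal vectors in the same class
  have hdiff : ∀ x ∈ minVecs (latticeOf b), ∀ x' ∈ minVecs (latticeOf b),
      aTop b x' = aTop b x → aCoef b x' (aTop b x') = aCoef b x (aTop b x) →
      x - x' = aW b x (aTop b x) - aW b x' (aTop b x) := by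
    intro x hx x' hx' ht hc
    have h1 := hkey0 x hx
    have h2 := hkey0 x' hx'
    rw [ht] at h2 hc
    rw [hc] at h2
    conv_lhs => rw [h1, h2]
    abel
  -- two distinct minimal vectors in the same class have opposite projections
  have hpair : ∀ x ∈ minVecs (latticeOf b), ∀ x' ∈ minVecs (latticeOf b),
      aTop b x' = aTop b x → aCoef b x' (aTop b x') = aCoef b x (aTop b x) → x ≠ x' →
      aW b x' (aTop b x) = - aW b x (aTop b x) := by
    intro x hx x' hx' ht hc hne
    obtain ⟨hxL, hxne, -⟩ := id hx
    obtain ⟨hx'L, hx'ne, -⟩ := id hx'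
    have hd := hdiff x hx x' hx' ht hc
    have hdL : x - x' ∈ latticeOf b := lat_sub_mem b hxL hx'L
    have hdne : x - x' ≠ 0 := sub_ne_zero.mpr hne
    have hmd : m ≤ ‖x - x'‖ := hmlb _ hdL hdne
    have hu := hwb x hx
    have hv' := hwb x' hx'
    rw [ht] at hv'
    set u := aW b x (aTop b x)
    set v := aW b x' (aTop b x)
    have hpar := norm_add_sq_real u v
    have hpar2 := norm_sub_sq_real u v
    have hmd2 : m^2 ≤ ‖u - v‖^2 := by
      rw [← hd]
      have := pow_le_pow_left₀ hm0.le hmd 2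
      simpa using this
    have h1 : u + v = 0 := by
      have h2 := sq_nonneg ‖u + v‖
      have h3 : ‖u + v‖ = 0 := by nlinarith [norm_nonneg (u + v)]
      exact norm_eq_zero.mp h3
    exact eq_neg_of_add_eq_zero_left (by rwa [add_comm] at h1)
  set T : Finset (Fin n × ℤ) := Finset.univ ×ˢ ({-1, 1} : Finset ℤ) with hT
  have hfT : ∀ x ∈ minVecs (latticeOf b), (aTop b x, aCoef b x (aTop b x)) ∈ T := by
    intro x hx
    rcases hc1 x hx with h | h <;> simp [hT, h]
  have hfib : ∀ t : Fin n × ℤ,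
      {x ∈ minVecs (latticeOf b) | (aTop b x, aCoef b x (aTop b x)) = t}.Finite ∧
      {x ∈ minVecs (latticeOf b) | (aTop b x, aCoef b x (aTop b x)) = t}.ncard ≤
        (if t.1 = 0 then 1 else 2) := by
    intro t
    set F := {x ∈ minVecs (latticeOf b) | (aTop b x, aCoef b x (aTop b x)) = t} with hF
    have hmemF : ∀ x ∈ F,
        x ∈ minVecs (latticeOf b) ∧ aTop b x = t.1 ∧ aCoef b x (aTop b x) = t.2 := by
      rintro x ⟨hx, hfx⟩
      exact ⟨hx, congrArg Prod.fst hfx, congrArg Prod.snd hfx⟩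
    rcases Set.eq_empty_or_nonempty F with h | ⟨a, ha⟩
    · constructor
      · rw [h]; exact Set.finite_empty
      · rw [h]; simp
    obtain ⟨haS, hat, hac⟩ := hmemF a ha
    by_cases h0 : t.1 = 0
    · have hsub : F ⊆ {a} := by
        intro z hz
        obtain ⟨hzS, hzt, hzc⟩ := hmemF z hz
        have ht : aTop b z = aTop b a := by rw [hzt, hat]
        have hc : aCoef b z (aTop b z) = aCoef b a (aTop b a) := by rw [hzc, hac]
        have hd := hdiff a haS z hzS ht hc
        rw [hat, h0] at hd
        rw [hw0, hw0, sub_self] at hd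
        have haz : a = z := sub_eq_zero.mp hd
        simp [← haz]
      constructor
      · exact (Set.finite_singleton a).subset hsub
      · rw [if_pos h0]
        exact le_trans (Set.ncard_le_ncard hsub (Set.finite_singleton a)) (by simp)
    · by_cases h2 : ∀ z ∈ F, z = a
      · have hsub : F ⊆ {a} := fun z hz => h2 z hz
        constructor
        · exact (Set.finite_singleton a).subset hsub
        · rw [if_neg h0]
          exact le_trans (Set.ncard_le_ncard hsub (Set.finite_singleton a)) (by simp)
      · push_neg at h2
        obtain ⟨a', ha', hne⟩ := h2
        obtain ⟨ha'S, ha't, ha'c⟩ := hmemF a' ha'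
        have hsub : F ⊆ {a, a'} := by
          intro z hz
          by_contra hz2
          simp only [Set.mem_insert_iff, Set.mem_singleton_iff] at hz2
          push_neg at hz2
          obtain ⟨hza, hza'⟩ := hz2
          obtain ⟨hzS, hzt, hzc⟩ := hmemF z hz
          have e1 : aW b z (aTop b a) = - aW b a (aTop b a) :=
            hpair a haS z hzS (by rw [hzt, hat]) (by rw [hzc, hac]) (Ne.symm hza)
          have e2 : aW b a' (aTop b a) = - aW b a (aTop b a) :=
            hpair a haS a' ha'S (by rw [ha't, hat]) (by rw [ha'c, hac]) (Ne.symm hne)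
          have ht' : aTop b z = aTop b a' := by rw [hzt, ha't]
          have hc' : aCoef b z (aTop b z) = aCoef b a' (aTop b a') := by rw [hzc, ha'c]
          have hd := hdiff a' ha'S z hzS ht' hc'
          have hk : aTop b a' = aTop b a := by rw [ha't, hat]
          rw [hk, e1, e2, sub_self] at hd
          exact hza' (sub_eq_zero.mp hd).symm
        constructor
        · exact ((Set.finite_singleton a').insert a).subset hsub
        · rw [if_neg h0]
          refine le_trans (Set.ncard_le_ncard hsub ((Set.finite_singleton a').insert a)) ?_
          exact le_trans (Set.ncard_insert_le a {a'}) (by simp)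
  have hSfin : (minVecs (latticeOf b)).Finite := by
    refine Set.Finite.subset (Set.Finite.biUnion T.finite_toSet (fun t _ => (hfib t).1)) ?_
    intro x hx
    exact Set.mem_biUnion (hfT x hx) ⟨hx, rfl⟩
  rw [Set.ncard_eq_toFinset_card _ hSfin]
  have hmems : ∀ x, x ∈ hSfin.toFinset ↔ x ∈ minVecs (latticeOf b) := fun x =>
    Set.Finite.mem_toFinset hSfin
  rw [Finset.card_eq_sum_card_fiberwise
    (f := fun x => (aTop b x, aCoef b x (aTop b x))) (t := T)
    (fun x hx => hfT x ((hmems x).mp hx))]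
  have hbound : ∀ t ∈ T,
      (hSfin.toFinset.filter (fun x => (aTop b x, aCoef b x (aTop b x)) = t)).card
      ≤ (if t.1 = 0 then 1 else 2) := by
    intro t _
    have h1 : ((hSfin.toFinset.filter
          (fun x => (aTop b x, aCoef b x (aTop b x)) = t) : Finset _) : Set _)
        ⊆ {x ∈ minVecs (latticeOf b) | (aTop b x, aCoef b x (aTop b x)) = t} := by
      intro x hx
      simp only [Finset.coe_filter, Set.mem_setOf_eq] at hx
      exact ⟨(hmems x).mp hx.1, hx.2⟩
    calc (hSfin.toFinset.filter (fun x => (aTop b x, aCoef b x (aTop b x)) = t)).card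
        = ((hSfin.toFinset.filter
            (fun x => (aTop b x, aCoef b x (aTop b x)) = t) : Finset _) : Set _).ncard :=
          (Set.ncard_coe_finset _).symm
      _ ≤ _ := le_trans (Set.ncard_le_ncard h1 (hfib t).1) (hfib t).2
  refine le_trans (Finset.sum_le_sum hbound) ?_
  rw [hT, Finset.sum_product]
  have hsum1 : ∀ k : Fin n,
      (∑ _e ∈ ({-1, 1} : Finset ℤ), (if k = 0 then 1 else 2)) = 2 * (if k = 0 then 1 else 2) := by
    intro k
    rw [Finset.sum_const]
    have : ({-1, 1} : Finset ℤ).card = 2 := by decide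
    rw [this]
    ring
  rw [Finset.sum_congr rfl (fun k _ => hsum1 k)]
  rw [← Finset.sum_erase_add _ _ (Finset.mem_univ (0 : Fin n))]
  have h2 : ∀ k ∈ Finset.univ.erase (0 : Fin n),
      2 * (if k = (0 : Fin n) then 1 else 2) = 4 := by
    intro k hk
    rw [if_neg (Finset.ne_of_mem_erase hk)]
  rw [Finset.sum_congr rfl h2, Finset.sum_const, if_pos rfl]
  have h3 : (Finset.univ.erase (0 : Fin n)).card = n - 1 := by
    rw [Finset.card_erase_of_mem (Finset.mem_univ _), Finset.card_univ, Fintype.card_fin]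
  rw [h3]
  simp only [smul_eq_mul]
  omega
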